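/- Let K be a field, A, B ∈ K, and let R ∈ K[[z]] be of the form R = z·V with V ∈ K[[z]] and V(0) = 1, and suppose R satisfies R'² = B·R⁶ + A·R⁴ + 1. Then the power series P := V⁻² has constant coefficient 1 and satisfies (z·P' − 2·P)² = 4·(P³ + A·z⁴·P + B·z⁶). -/

import Mathlib

open PowerSeries

/-- Correctness of the fast algorithm computing `℘` from the solution `R` of
`R'² = B·R⁶ + A·R⁴ + 1`: if `R = z·V` with `V(0) = 1` satisfies this equation,
then `P := V⁻²` (so that `P = z²·℘ = z²/R²`) has constant coefficient `1` and
satisfies `(z·P' − 2·P)² = 4·(P³ + A·z⁴·P + B·z⁶)`. -/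
theorem wp_from_R {K : Type*} [Field K] (A B : K)
    (V R : PowerSeries K) (hV : constantCoeff V = 1) (hR : R = X * V)
    (hode : (d⁄dX K R) ^ 2 = C B * R ^ 6 + C A * R ^ 4 + 1)
    (P : PowerSeries K) (hP : P = (V ^ 2)⁻¹) :
    constantCoeff P = 1 ∧
      (X * d⁄dX K P - 2 * P) ^ 2 = 4 * (P ^ 3 + C A * X ^ 4 * P + C B * X ^ 6) := by
  have hVc : constantCoeff (V ^ 2) ≠ 0 := by
    simp [hV]
  have hu : V ^ 2 * P = 1 := by
    rw [hP]; exact PowerSeries.mul_inv_cancel _ hVc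
  have hc : constantCoeff P = 1 := by
    have := congrArg (constantCoeff) hu
    simp only [map_mul, map_one, map_pow, hV, one_pow, one_mul] at this
    exact this
  refine ⟨hc, ?_⟩
  have hVne : (V : PowerSeries K) ≠ 0 := by
    intro h; apply hVc; simp [h]
  have hV6 : (V : PowerSeries K) ^ 6 ≠ 0 := pow_ne_zero _ hVne
  apply mul_right_cancel₀ hV6
  have dV2 : d⁄dX K (V ^ 2) = 2 * V * d⁄dX K V := by
    rw [pow_two, Derivation.leibniz]
    simp only [smul_eq_mul]; ring
  have hder : V ^ 2 * d⁄dX K P + 2 * V * d⁄dX K V * P = 0 := by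
    have h := congrArg (d⁄dX K) hu
    rw [Derivation.leibniz, dV2] at h
    simp only [smul_eq_mul, Derivation.map_one_eq_zero] at h
    linear_combination h
  have hRd : d⁄dX K R = V + X * d⁄dX K V := by
    rw [hR, Derivation.leibniz, derivative_X]
    simp only [smul_eq_mul]; ring
  -- key: (X * P' - 2P) * V³ = -2 * R'
  have key : (X * d⁄dX K P - 2 * P) * V ^ 3 = -2 * d⁄dX K R := by
    have h1 : V ^ 3 * d⁄dX K P = -2 * d⁄dX K V * (V ^ 2 * P) := by
      linear_combination V * hder
    have h2 : P * V ^ 3 = V := by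
      calc P * V ^ 3 = (V ^ 2 * P) * V := by ring
      _ = V := by rw [hu, one_mul]
    calc (X * d⁄dX K P - 2 * P) * V ^ 3
        = X * (V ^ 3 * d⁄dX K P) - 2 * (P * V ^ 3) := by ring
      _ = X * (-2 * d⁄dX K V * (V ^ 2 * P)) - 2 * V := by rw [h1, h2]
      _ = -2 * (V + X * d⁄dX K V) := by rw [hu]; ring
      _ = -2 * d⁄dX K R := by rw [hRd]
  calc (X * d⁄dX K P - 2 * P) ^ 2 * V ^ 6
      = ((X * d⁄dX K P - 2 * P) * V ^ 3) ^ 2 := by ring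
    _ = 4 * (d⁄dX K R) ^ 2 := by rw [key]; ring
    _ = 4 * (C B * (X * V) ^ 6 + C A * (X * V) ^ 4 + 1) := by rw [hode, hR]
    _ = 4 * (C B * X ^ 6 * V ^ 6 + C A * X ^ 4 * (V ^ 2 * P) * V ^ 4
          + (V ^ 2 * P) ^ 3) := by rw [hu]; ring
    _ = 4 * (P ^ 3 + C A * X ^ 4 * P + C B * X ^ 6) * V ^ 6 := by ring
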